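/- Let e₁, e₂, e₃ be nonnegative constants and C > 0. Suppose a smooth axially symmetric function f on ℝ³ satisfies ∫_{ℝ³} ( r^{e₁}|f(r,z)|² + r^{e₂}|∇f(r,z)|² + r^{e₃}|∂_z ∇f(r,z)|² ) dx ≤ C, where r = √(x₁²+x₂²) and z = x₃. Then there is a constant C' , depending only on C, e₁, e₂, e₃, such that for every r > 0: (i) ∫_{−∞}^{∞} |f(r,z)|² dz ≤ C' r^{−(e₁+e₂)/2 − 1}; (ii) ∫_{−∞}^{∞} |∂_z f(r,z)|² dz ≤ C' r^{−(e₃+e₂)/2 − 1}; (iii) |f(r,z)|² ≤ C' r^{−(e₁+2e₂+e₃)/4 − 1} for all z ∈ ℝ. -/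

import Mathlib

open MeasureTheory Real Set

noncomputable section

/-- Partial derivative `∂_r` for a function of `(r, z)`. -/
def pr (F : ℝ → ℝ → ℝ) : ℝ → ℝ → ℝ := fun r z => deriv (fun s => F s z) r

/-- Partial derivative `∂_z` for a function of `(r, z)`. -/
def pz (F : ℝ → ℝ → ℝ) : ℝ → ℝ → ℝ := fun r z => deriv (fun s => F r s) z

lemma curry_pr (F : ℝ × ℝ → ℝ) (hF : Differentiable ℝ F) (r z : ℝ) :
    HasDerivAt (fun s => F (s, z)) (fderiv ℝ F (r, z) (1, 0)) r := by
  have h1 : HasDerivAt (fun s : ℝ => (s, z)) ((1:ℝ), (0:ℝ)) r :=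
    (hasDerivAt_id r).prodMk (hasDerivAt_const r z)
  exact (hF (r, z)).hasFDerivAt.comp_hasDerivAt r h1

lemma curry_pz (F : ℝ × ℝ → ℝ) (hF : Differentiable ℝ F) (r z : ℝ) :
    HasDerivAt (fun t => F (r, t)) (fderiv ℝ F (r, z) (0, 1)) z := by
  have h1 : HasDerivAt (fun t : ℝ => (r, t)) ((0:ℝ), (1:ℝ)) z :=
    (hasDerivAt_const z r).prodMk (hasDerivAt_id z)
  exact (hF (r, z)).hasFDerivAt.comp_hasDerivAt z h1

variable {q : ℝ → ℝ → ℝ}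

lemma hq_diff (hq : ContDiff ℝ (⊤ : ℕ∞) (fun w : ℝ × ℝ => q w.1 w.2)) :
    Differentiable ℝ (fun w : ℝ × ℝ => q w.1 w.2) :=
  hq.differentiable (by simp)

lemma pr_eq (hq : ContDiff ℝ (⊤ : ℕ∞) (fun w : ℝ × ℝ => q w.1 w.2)) (r z : ℝ) :
    pr q r z = fderiv ℝ (fun w : ℝ × ℝ => q w.1 w.2) (r, z) (1, 0) :=
  (curry_pr _ (hq_diff hq) r z).deriv

lemma pz_eq (hq : ContDiff ℝ (⊤ : ℕ∞) (fun w : ℝ × ℝ => q w.1 w.2)) (r z : ℝ) :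
    pz q r z = fderiv ℝ (fun w : ℝ × ℝ => q w.1 w.2) (r, z) (0, 1) :=
  (curry_pz _ (hq_diff hq) r z).deriv

lemma contDiff_P (hq : ContDiff ℝ (⊤ : ℕ∞) (fun w : ℝ × ℝ => q w.1 w.2)) (v : ℝ × ℝ) :
    ContDiff ℝ (⊤ : ℕ∞) (fun w : ℝ × ℝ => fderiv ℝ (fun w : ℝ × ℝ => q w.1 w.2) w v) := by
  have h := hq.fderiv_right (m := ((⊤ : ℕ∞) : WithTop ℕ∞)) (by exact_mod_cast le_top)
  exact h.clm_apply contDiff_const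

lemma contDiff_pr (hq : ContDiff ℝ (⊤ : ℕ∞) (fun w : ℝ × ℝ => q w.1 w.2)) :
    ContDiff ℝ (⊤ : ℕ∞) (fun w : ℝ × ℝ => pr q w.1 w.2) := by
  have h := contDiff_P hq ((1:ℝ), (0:ℝ))
  convert h using 2 with w
  exact pr_eq hq w.1 w.2

lemma contDiff_pz (hq : ContDiff ℝ (⊤ : ℕ∞) (fun w : ℝ × ℝ => q w.1 w.2)) :
    ContDiff ℝ (⊤ : ℕ∞) (fun w : ℝ × ℝ => pz q w.1 w.2) := by
  have h := contDiff_P hq ((0:ℝ), (1:ℝ))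
  convert h using 2 with w
  exact pz_eq hq w.1 w.2

lemma symm_mixed (hq : ContDiff ℝ (⊤ : ℕ∞) (fun w : ℝ × ℝ => q w.1 w.2)) (r z : ℝ) :
    pr (pz q) r z = pz (pr q) r z := by
  set Q : ℝ × ℝ → ℝ := fun w : ℝ × ℝ => q w.1 w.2 with hQ
  have hdiff : Differentiable ℝ Q := hq_diff hq
  have hF' : Differentiable ℝ (fderiv ℝ Q) :=
    (hq.fderiv_right (m := ((⊤ : ℕ∞) : WithTop ℕ∞)) (by exact_mod_cast le_top)).differentiable
      (by simp)
  have hsym := second_derivative_symmetric (f := Q)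
    (fun y => (hdiff y).hasFDerivAt) ((hF' (r, z)).hasFDerivAt) ((1:ℝ),(0:ℝ)) ((0:ℝ),(1:ℝ))
  have key : ∀ v w : ℝ × ℝ,
      fderiv ℝ (fun x : ℝ × ℝ => fderiv ℝ Q x v) (r, z) w
        = fderiv ℝ (fderiv ℝ Q) (r, z) w v := by
    intro v w
    have hL := ((ContinuousLinearMap.apply ℝ ℝ v).hasFDerivAt.comp (r, z)
      (hF' (r, z)).hasFDerivAt)
    have : (fun x : ℝ × ℝ => fderiv ℝ Q x v)
        = (ContinuousLinearMap.apply ℝ ℝ v) ∘ (fderiv ℝ Q) := rfl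
    rw [this, hL.fderiv]
    rfl
  have e1 : pz (pr q) r z = fderiv ℝ (fderiv ℝ Q) (r, z) ((0:ℝ),(1:ℝ)) ((1:ℝ),(0:ℝ)) := by
    have hcd := contDiff_pr hq
    have : pz (pr q) r z
        = fderiv ℝ (fun w : ℝ × ℝ => pr q w.1 w.2) (r, z) ((0:ℝ),(1:ℝ)) :=
      (curry_pz _ (hq_diff hcd) r z).deriv
    rw [this]
    have hfun : (fun w : ℝ × ℝ => pr q w.1 w.2)
        = fun x : ℝ × ℝ => fderiv ℝ Q x ((1:ℝ),(0:ℝ)) := by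
      funext w; exact pr_eq hq w.1 w.2
    rw [hfun, key]
  have e2 : pr (pz q) r z = fderiv ℝ (fderiv ℝ Q) (r, z) ((1:ℝ),(0:ℝ)) ((0:ℝ),(1:ℝ)) := by
    have hcd := contDiff_pz hq
    have : pr (pz q) r z
        = fderiv ℝ (fun w : ℝ × ℝ => pz q w.1 w.2) (r, z) ((1:ℝ),(0:ℝ)) :=
      (curry_pr _ (hq_diff hcd) r z).deriv
    rw [this]
    have hfun : (fun w : ℝ × ℝ => pz q w.1 w.2)
        = fun x : ℝ × ℝ => fderiv ℝ Q x ((0:ℝ),(1:ℝ)) := by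
      funext w; exact pz_eq hq w.1 w.2
    rw [hfun, key]
  rw [e1, e2, hsym]

lemma ftc_sq (u u' : ℝ → ℝ) (hder : ∀ t, HasDerivAt u (u' t) t)
    (hu : Continuous u) (hu' : Continuous u') (a b : ℝ) (hab : a ≤ b) :
    ENNReal.ofReal (u a ^ 2) ≤ ENNReal.ofReal (u b ^ 2)
      + ∫⁻ t in Ioc a b, ENNReal.ofReal (2 * |u t| * |u' t|) := by
  have hFTC : ∫ t in a..b, (2 * u t * u' t) = u b ^ 2 - u a ^ 2 := by
    apply intervalIntegral.integral_eq_sub_of_hasDerivAt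
    · intro t _
      have := (hder t).fun_pow 2
      simpa [mul_comm, mul_assoc, mul_left_comm] using this
    · exact ((continuous_const.mul hu).mul hu').intervalIntegrable a b
  have habs : u a ^ 2 ≤ u b ^ 2 + ∫ t in a..b, 2 * |u t| * |u' t| := by
    have h1 : u a ^ 2 = u b ^ 2 - ∫ t in a..b, (2 * u t * u' t) := by rw [hFTC]; ring
    have h2 : |∫ t in a..b, (2 * u t * u' t)| ≤ ∫ t in a..b, |2 * u t * u' t| :=
      intervalIntegral.abs_integral_le_integral_abs hab
    have h3 : (∫ t in a..b, |2 * u t * u' t|) = ∫ t in a..b, 2 * |u t| * |u' t| := by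
      congr 1; funext t; rw [abs_mul, abs_mul]; simp [abs_of_nonneg]
    rw [h1]
    have := neg_abs_le (∫ t in a..b, (2 * u t * u' t))
    nlinarith [h2, h3.symm ▸ h2]
  calc ENNReal.ofReal (u a ^ 2)
      ≤ ENNReal.ofReal (u b ^ 2 + ∫ t in a..b, 2 * |u t| * |u' t|) :=
        ENNReal.ofReal_le_ofReal habs
    _ ≤ ENNReal.ofReal (u b ^ 2) + ENNReal.ofReal (∫ t in a..b, 2 * |u t| * |u' t|) :=
        ENNReal.ofReal_add_le
    _ = ENNReal.ofReal (u b ^ 2) + ∫⁻ t in Ioc a b, ENNReal.ofReal (2 * |u t| * |u' t|) := by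
        congr 1
        rw [intervalIntegral.integral_of_le hab]
        apply ofReal_integral_eq_lintegral_ofReal
        · exact ((continuous_const.mul hu.abs).mul hu'.abs).integrableOn_Ioc
        · filter_upwards with t
          positivity

lemma holder_two {α : Type*} [MeasurableSpace α] (μ : Measure α) (f g : α → ENNReal)
    (hf : AEMeasurable f μ) (hg : AEMeasurable g μ) :
    ∫⁻ a, f a * g a ∂μ
      ≤ (∫⁻ a, f a ^ (2:ℝ) ∂μ) ^ (1/2 : ℝ) * (∫⁻ a, g a ^ (2:ℝ) ∂μ) ^ (1/2 : ℝ) := by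
  have := ENNReal.lintegral_mul_le_Lp_mul_Lq μ (p := 2) (q := 2) (by constructor <;> norm_num) hf hg
  simpa using this

lemma decay (A : ℝ → ENNReal) (e CC : ℝ) (he : 0 ≤ e)
    (hbound : ∫⁻ s in Ioi (0:ℝ), ENNReal.ofReal (s ^ (e+1)) * A s ≤ ENNReal.ofReal CC)
    (ε : ℝ) (hε : 0 < ε) (T : ℝ) : ∃ b, T < b ∧ A b ≤ ENNReal.ofReal ε := by
  by_contra hcon
  push_neg at hcon
  set M := max T 1 with hM
  have hM1 : (1:ℝ) ≤ M := le_max_right _ _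
  have hlow : ∫⁻ s in Ioi M, ENNReal.ofReal ε
      ≤ ∫⁻ s in Ioi (0:ℝ), ENNReal.ofReal (s ^ (e+1)) * A s := by
    refine le_trans (setLIntegral_mono' measurableSet_Ioi ?_)
      (lintegral_mono_set (Ioi_subset_Ioi (by linarith)))
    intro s hs
    have hs1 : (1:ℝ) ≤ s := le_trans hM1 (le_of_lt hs)
    have h1 : (1:ENNReal) ≤ ENNReal.ofReal (s ^ (e+1)) := by
      rw [show (1:ENNReal) = ENNReal.ofReal 1 by simp]
      apply ENNReal.ofReal_le_ofReal
      calc (1:ℝ) = s ^ (0:ℝ) := by rw [Real.rpow_zero]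
        _ ≤ s ^ (e+1) := Real.rpow_le_rpow_of_exponent_le hs1 (by linarith)
    have h2 : ENNReal.ofReal ε ≤ A s :=
      (hcon s (lt_of_le_of_lt (le_max_left T 1) hs)).le
    calc ENNReal.ofReal ε = 1 * ENNReal.ofReal ε := (one_mul _).symm
      _ ≤ ENNReal.ofReal (s ^ (e+1)) * A s := mul_le_mul' h1 h2
  rw [setLIntegral_const, Real.volume_Ioi, ENNReal.mul_top (by simp [hε])] at hlow
  exact (lt_irrefl ⊤ (lt_of_le_of_lt (le_trans hlow hbound) ENNReal.ofReal_lt_top))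

lemma tonelli_slice (G : ℝ → ℝ → ℝ) (hG : Continuous (fun w : ℝ × ℝ => G w.1 w.2)) (e : ℝ) :
    ∫⁻ w in Ioi (0:ℝ) ×ˢ (univ : Set ℝ),
        ENNReal.ofReal (w.1 ^ e * G w.1 w.2 ^ 2 * w.1)
      = ∫⁻ s in Ioi (0:ℝ), ENNReal.ofReal (s ^ (e+1)) * ∫⁻ z, ENNReal.ofReal (G s z ^ 2) := by
  have hmeas : Measurable fun w : ℝ × ℝ => ENNReal.ofReal (w.1 ^ e * G w.1 w.2 ^ 2 * w.1) := by
    fun_prop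
  rw [Measure.volume_eq_prod, ← Measure.prod_restrict, lintegral_prod _ hmeas.aemeasurable]
  rw [Measure.restrict_univ]
  apply setLIntegral_congr_fun measurableSet_Ioi
  intro s hs
  beta_reduce
  have hs' : (0:ℝ) < s := hs
  rw [← lintegral_const_mul' _ _ ENNReal.ofReal_ne_top]
  congr 1; funext z
  rw [← ENNReal.ofReal_mul (by positivity)]
  congr 1
  rw [Real.rpow_add hs', Real.rpow_one]; ring

lemma Abound (g : ℝ → ℝ → ℝ) (hg : ContDiff ℝ (⊤ : ℕ∞) (fun w : ℝ × ℝ => g w.1 w.2))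
    (CC ea eb : ℝ) (hCC : 0 < CC) (hea : 0 ≤ ea) (heb : 0 ≤ eb)
    (h1 : ∫⁻ w in Ioi (0:ℝ) ×ˢ (univ : Set ℝ),
        ENNReal.ofReal (w.1 ^ ea * g w.1 w.2 ^ 2 * w.1) ≤ ENNReal.ofReal CC)
    (h2 : ∫⁻ w in Ioi (0:ℝ) ×ˢ (univ : Set ℝ),
        ENNReal.ofReal (w.1 ^ eb * pr g w.1 w.2 ^ 2 * w.1) ≤ ENNReal.ofReal CC)
    (r : ℝ) (hr : 0 < r) :
    ∫⁻ z, ENNReal.ofReal (g r z ^ 2)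
      ≤ ENNReal.ofReal (2 * CC * r ^ (-(ea+eb)/2 - 1)) := by
  have hcontg : Continuous (fun w : ℝ × ℝ => g w.1 w.2) := hg.continuous
  have hcontg' : Continuous (fun w : ℝ × ℝ => pr g w.1 w.2) := (contDiff_pr hg).continuous
  set α : ℝ := (ea+eb)/2 + 1 with hαdef
  have hα : 0 ≤ α := by simp only [hαdef]; linarith
  have hexp : -(ea+eb)/2 - 1 = -α := by simp only [hαdef]; ring
  rw [hexp]
  set A : ℝ → ENNReal := fun s => ∫⁻ z, ENNReal.ofReal (g s z ^ 2) with hAdef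
  have hA1 : ∫⁻ s in Ioi (0:ℝ), ENNReal.ofReal (s ^ (ea+1)) * A s ≤ ENNReal.ofReal CC := by
    rw [← tonelli_slice g hcontg ea]; exact h1
  set K := ENNReal.ofReal (2 * CC * r ^ (-α)) with hKdef
  have main : ∀ b, r ≤ b → A r ≤ A b + K := by
    intro b hrb
    have hpt : ∀ z, ENNReal.ofReal (g r z ^ 2) ≤ ENNReal.ofReal (g b z ^ 2)
        + ∫⁻ t in Ioc r b, ENNReal.ofReal (2 * |g t z| * |pr g t z|) := by
      intro z
      refine ftc_sq (fun s => g s z) (fun s => pr g s z) ?_ ?_ ?_ r b hrb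
      · intro t
        have h := curry_pr _ (hq_diff hg) t z
        rwa [← pr_eq hg t z] at h
      · exact hcontg.comp (continuous_id.prodMk continuous_const)
      · exact hcontg'.comp (continuous_id.prodMk continuous_const)
    have step1 : A r ≤ A b
        + ∫⁻ z, ∫⁻ t in Ioc r b, ENNReal.ofReal (2 * |g t z| * |pr g t z|) := by
      calc A r ≤ ∫⁻ z, (ENNReal.ofReal (g b z ^ 2)
            + ∫⁻ t in Ioc r b, ENNReal.ofReal (2 * |g t z| * |pr g t z|)) := lintegral_mono hpt
        _ = _ := lintegral_add_left (by fun_prop) _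
    have hswap : (∫⁻ z, ∫⁻ t in Ioc r b, ENNReal.ofReal (2 * |g t z| * |pr g t z|))
        = ∫⁻ w in Ioc r b ×ˢ (univ : Set ℝ),
            ENNReal.ofReal (2 * |g w.1 w.2| * |pr g w.1 w.2|) := by
      rw [Measure.volume_eq_prod, ← Measure.prod_restrict, Measure.restrict_univ,
        lintegral_prod _ (by fun_prop :
          Measurable fun w : ℝ × ℝ =>
            ENNReal.ofReal (2 * |g w.1 w.2| * |pr g w.1 w.2|)).aemeasurable]
      exact (lintegral_lintegral_swap (by fun_prop)).symm
    have hmono : (∫⁻ w in Ioc r b ×ˢ (univ : Set ℝ),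
          ENNReal.ofReal (2 * |g w.1 w.2| * |pr g w.1 w.2|))
        ≤ ∫⁻ w in Ioi r ×ˢ (univ : Set ℝ),
            ENNReal.ofReal (2 * |g w.1 w.2| * |pr g w.1 w.2|) :=
      lintegral_mono_set (prod_mono Ioc_subset_Ioi_self subset_rfl)
    -- Hölder on Ioi r ×ˢ univ
    set S : Set (ℝ × ℝ) := Ioi r ×ˢ (univ : Set ℝ) with hSdef
    have hSmeas : MeasurableSet S := measurableSet_Ioi.prod MeasurableSet.univ
    set F : ℝ × ℝ → ENNReal :=
      fun w => (ENNReal.ofReal (w.1 ^ ea * g w.1 w.2 ^ 2 * w.1)) ^ (1/2 : ℝ) with hFdef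
    set G2 : ℝ × ℝ → ENNReal :=
      fun w => (ENNReal.ofReal (w.1 ^ eb * pr g w.1 w.2 ^ 2 * w.1)) ^ (1/2 : ℝ) with hG2def
    have hptS : ∀ w ∈ S, ENNReal.ofReal (2 * |g w.1 w.2| * |pr g w.1 w.2|)
        ≤ ENNReal.ofReal (2 * r ^ (-α)) * (F w * G2 w) := by
      rintro ⟨s, z⟩ hw
      have hs : r < s := hw.1
      have hs0 : (0:ℝ) < s := lt_trans hr hs
      have e1 : F (s, z) = ENNReal.ofReal (s ^ ((ea+1)/2) * |g s z|) := by
        show (ENNReal.ofReal (s ^ ea * g s z ^ 2 * s)) ^ (1/2:ℝ) = _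
        rw [ENNReal.ofReal_rpow_of_nonneg
          (by positivity) (by norm_num : (0:ℝ) ≤ 1/2)]
        congr 1
        rw [show s ^ ea * g s z ^ 2 * s = s ^ (ea+1) * |g s z| ^ 2 by
          rw [Real.rpow_add hs0, Real.rpow_one, sq_abs]; ring]
        rw [Real.mul_rpow (Real.rpow_nonneg hs0.le _) (by positivity),
          ← Real.rpow_natCast |g s z| 2, ← Real.rpow_mul (abs_nonneg _),
          ← Real.rpow_mul hs0.le]
        norm_num
        left
        congr 1
        ring
      have e2 : G2 (s, z) = ENNReal.ofReal (s ^ ((eb+1)/2) * |pr g s z|) := by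
        show (ENNReal.ofReal (s ^ eb * pr g s z ^ 2 * s)) ^ (1/2:ℝ) = _
        rw [ENNReal.ofReal_rpow_of_nonneg
          (by positivity) (by norm_num : (0:ℝ) ≤ 1/2)]
        congr 1
        rw [show s ^ eb * pr g s z ^ 2 * s = s ^ (eb+1) * |pr g s z| ^ 2 by
          rw [Real.rpow_add hs0, Real.rpow_one, sq_abs]; ring]
        rw [Real.mul_rpow (Real.rpow_nonneg hs0.le _) (by positivity),
          ← Real.rpow_natCast |pr g s z| 2, ← Real.rpow_mul (abs_nonneg _),
          ← Real.rpow_mul hs0.le]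
        norm_num
        left
        congr 1
        ring
      rw [e1, e2, ← ENNReal.ofReal_mul (by positivity), ← ENNReal.ofReal_mul (by positivity)]
      apply ENNReal.ofReal_le_ofReal
      have hcomb : s ^ ((ea+1)/2) * s ^ ((eb+1)/2) = s ^ α := by
        rw [← Real.rpow_add hs0]; congr 1; rw [hαdef]; ring
      have hge1 : 1 ≤ r ^ (-α) * s ^ α := by
        have h1 : r ^ α ≤ s ^ α := Real.rpow_le_rpow hr.le hs.le hα
        have h2 : 0 < r ^ α := Real.rpow_pos_of_pos hr α
        rw [Real.rpow_neg hr.le]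
        calc (1:ℝ) = (r ^ α)⁻¹ * r ^ α := (inv_mul_cancel₀ (ne_of_gt h2)).symm
          _ ≤ (r ^ α)⁻¹ * s ^ α := by
            exact mul_le_mul_of_nonneg_left h1 (inv_nonneg.2 h2.le)
      have hab : 0 ≤ |g s z| * |pr g s z| := by positivity
      have hrpos : 0 ≤ r ^ (-α) := Real.rpow_nonneg hr.le _
      calc 2 * |g s z| * |pr g s z| = 1 * (2 * (|g s z| * |pr g s z|)) := by ring
        _ ≤ (r ^ (-α) * s ^ α) * (2 * (|g s z| * |pr g s z|)) := by
            apply mul_le_mul_of_nonneg_right hge1 (by positivity)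
        _ = 2 * r ^ (-α) * (s ^ ((ea+1)/2) * |g s z| * (s ^ ((eb+1)/2) * |pr g s z|)) := by
            rw [show s ^ ((ea+1)/2) * |g s z| * (s ^ ((eb+1)/2) * |pr g s z|)
              = (s ^ ((ea+1)/2) * s ^ ((eb+1)/2)) * (|g s z| * |pr g s z|) by ring, hcomb]
            ring
    have hmeasF : Measurable F := by fun_prop
    have hmeasG2 : Measurable G2 := by fun_prop
    have hhold := holder_two (volume.restrict S) F G2 hmeasF.aemeasurable hmeasG2.aemeasurable
    have hF2 : (∫⁻ w in S, F w ^ (2:ℝ)) ≤ ENNReal.ofReal CC := by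
      have hptF : ∀ w : ℝ × ℝ, F w ^ (2:ℝ)
          = ENNReal.ofReal (w.1 ^ ea * g w.1 w.2 ^ 2 * w.1) := by
        intro w
        show ((ENNReal.ofReal (w.1 ^ ea * g w.1 w.2 ^ 2 * w.1)) ^ (1/2:ℝ)) ^ (2:ℝ) = _
        rw [← ENNReal.rpow_mul]
        norm_num
      simp_rw [hptF]
      exact le_trans (lintegral_mono_set (prod_mono (Ioi_subset_Ioi hr.le) subset_rfl)) h1
    have hG22 : (∫⁻ w in S, G2 w ^ (2:ℝ)) ≤ ENNReal.ofReal CC := by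
      have hptG : ∀ w : ℝ × ℝ, G2 w ^ (2:ℝ)
          = ENNReal.ofReal (w.1 ^ eb * pr g w.1 w.2 ^ 2 * w.1) := by
        intro w
        show ((ENNReal.ofReal (w.1 ^ eb * pr g w.1 w.2 ^ 2 * w.1)) ^ (1/2:ℝ)) ^ (2:ℝ) = _
        rw [← ENNReal.rpow_mul]
        norm_num
      simp_rw [hptG]
      exact le_trans (lintegral_mono_set (prod_mono (Ioi_subset_Ioi hr.le) subset_rfl)) h2
    have hRHS : (∫⁻ w in S, ENNReal.ofReal (2 * |g w.1 w.2| * |pr g w.1 w.2|)) ≤ K := by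
      calc (∫⁻ w in S, ENNReal.ofReal (2 * |g w.1 w.2| * |pr g w.1 w.2|))
          ≤ ∫⁻ w in S, ENNReal.ofReal (2 * r ^ (-α)) * (F w * G2 w) :=
            setLIntegral_mono' hSmeas hptS
        _ = ENNReal.ofReal (2 * r ^ (-α)) * ∫⁻ w in S, F w * G2 w :=
            lintegral_const_mul' _ _ ENNReal.ofReal_ne_top
        _ ≤ ENNReal.ofReal (2 * r ^ (-α))
            * ((∫⁻ w in S, F w ^ (2:ℝ)) ^ (1/2:ℝ) * (∫⁻ w in S, G2 w ^ (2:ℝ)) ^ (1/2:ℝ)) :=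
            mul_le_mul_right hhold _
        _ ≤ ENNReal.ofReal (2 * r ^ (-α))
            * ((ENNReal.ofReal CC) ^ (1/2:ℝ) * (ENNReal.ofReal CC) ^ (1/2:ℝ)) := by
            exact mul_le_mul_right (mul_le_mul'
              (ENNReal.rpow_le_rpow hF2 (by norm_num))
              (ENNReal.rpow_le_rpow hG22 (by norm_num))) _
        _ = K := by
            rw [ENNReal.ofReal_rpow_of_nonneg hCC.le (by norm_num : (0:ℝ) ≤ 1/2),
              ← ENNReal.ofReal_mul (by positivity),
              ← ENNReal.ofReal_mul (by positivity), hKdef]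
            congr 1
            rw [show CC ^ (1/2:ℝ) * CC ^ (1/2:ℝ) = CC ^ ((1:ℝ)/2 + 1/2) from
              (Real.rpow_add hCC _ _).symm]
            norm_num
            ring
    calc A r ≤ A b + (∫⁻ z, ∫⁻ t in Ioc r b, ENNReal.ofReal (2 * |g t z| * |pr g t z|)) :=
          step1
      _ ≤ A b + K := add_le_add_right (le_trans (le_of_eq hswap) (le_trans hmono hRHS)) _
  refine ENNReal.le_of_forall_pos_le_add ?_
  intro ε hε _
  obtain ⟨b, hb, hAb⟩ := decay A ea CC hea hA1 (ε:ℝ) (by exact_mod_cast hε) r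
  calc A r ≤ A b + K := main b hb.le
    _ ≤ ENNReal.ofReal (ε:ℝ) + K := add_le_add_left hAb _
    _ = K + ε := by rw [ENNReal.ofReal_coe_nnreal, add_comm]


/-- if a smooth axially symmetric function `f(r,z)` satisfies
`∫ (r^{e₁}|f|² + r^{e₂}|∇f|² + r^{e₃}|∂_z∇f|²) dx ≤ C`, then with a constant `C'`
depending only on `C, e₁, e₂, e₃` one has, for every `r > 0`:
`∫ |f(r,z)|² dz ≤ C' r^{-(e₁+e₂)/2 - 1}`, `∫ |∂_z f(r,z)|² dz ≤ C' r^{-(e₃+e₂)/2 - 1}`,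
and `|f(r,z)|² ≤ C' r^{-(e₁+2e₂+e₃)/4 - 1}` for all `z`. -/
theorem stmt_14 (e1 e2 e3 C : ℝ)
    (he1 : 0 ≤ e1) (he2 : 0 ≤ e2) (he3 : 0 ≤ e3) (hC : 0 < C) :
    ∃ C' : ℝ, 0 < C' ∧ ∀ q : ℝ → ℝ → ℝ,
      ContDiff ℝ (⊤ : ℕ∞) (fun w : ℝ × ℝ => q w.1 w.2) →
      (∫⁻ w in Set.Ioi (0:ℝ) ×ˢ (Set.univ : Set ℝ),
        ENNReal.ofReal ((w.1 ^ e1 * q w.1 w.2 ^ 2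
          + w.1 ^ e2 * ((pr q w.1 w.2) ^ 2 + (pz q w.1 w.2) ^ 2)
          + w.1 ^ e3 * ((pz (pr q) w.1 w.2) ^ 2 + (pz (pz q) w.1 w.2) ^ 2))
          * (2 * π * w.1))) ≤ ENNReal.ofReal C →
      ∀ r : ℝ, 0 < r →
        ((∫⁻ z : ℝ, ENNReal.ofReal (q r z ^ 2))
            ≤ ENNReal.ofReal (C' * r ^ (-(e1 + e2)/2 - 1))) ∧
        ((∫⁻ z : ℝ, ENNReal.ofReal ((pz q r z) ^ 2))
            ≤ ENNReal.ofReal (C' * r ^ (-(e3 + e2)/2 - 1))) ∧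
        (∀ z : ℝ, q r z ^ 2 ≤ C' * r ^ (-(e1 + 2*e2 + e3)/4 - 1)) := by
  have hπ : (0:ℝ) < π := Real.pi_pos
  refine ⟨2 * C / π, by positivity, ?_⟩
  intro q hq H r hr
  set CC : ℝ := C / (2 * π) with hCCdef
  have hCC : 0 < CC := by positivity
  set BIG : ℝ × ℝ → ℝ := fun w =>
    (w.1 ^ e1 * q w.1 w.2 ^ 2
      + w.1 ^ e2 * ((pr q w.1 w.2) ^ 2 + (pz q w.1 w.2) ^ 2)
      + w.1 ^ e3 * ((pz (pr q) w.1 w.2) ^ 2 + (pz (pz q) w.1 w.2) ^ 2)) with hBIGdef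
  have hBIGnn : ∀ w : ℝ × ℝ, w ∈ Set.Ioi (0:ℝ) ×ˢ (Set.univ : Set ℝ) → 0 ≤ BIG w := by
    rintro ⟨s, z⟩ hw
    have hs : (0:ℝ) ≤ s := (hw.1 : (0:ℝ) < s).le
    have t1 : (0:ℝ) ≤ s ^ e1 := Real.rpow_nonneg hs _
    have t2 : (0:ℝ) ≤ s ^ e2 := Real.rpow_nonneg hs _
    have t3 : (0:ℝ) ≤ s ^ e3 := Real.rpow_nonneg hs _
    simp only [hBIGdef]
    positivity
  -- reduce the hypothesis
  have hBIGmeas : Continuous (fun w : ℝ × ℝ => q w.1 w.2) := hq.continuous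
  have hcpr : Continuous (fun w : ℝ × ℝ => pr q w.1 w.2) := (contDiff_pr hq).continuous
  have hcpz : Continuous (fun w : ℝ × ℝ => pz q w.1 w.2) := (contDiff_pz hq).continuous
  have hcpzpr : Continuous (fun w : ℝ × ℝ => pz (pr q) w.1 w.2) :=
    (contDiff_pz (contDiff_pr hq)).continuous
  have hcpzpz : Continuous (fun w : ℝ × ℝ => pz (pz q) w.1 w.2) :=
    (contDiff_pz (contDiff_pz hq)).continuous
  have hH2 : ∫⁻ w in Set.Ioi (0:ℝ) ×ˢ (Set.univ : Set ℝ),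
      ENNReal.ofReal (BIG w * w.1) ≤ ENNReal.ofReal CC := by
    have hsplit : ∫⁻ w in Set.Ioi (0:ℝ) ×ˢ (Set.univ : Set ℝ),
        ENNReal.ofReal (BIG w * (2 * π * w.1))
        = ENNReal.ofReal (2 * π) * ∫⁻ w in Set.Ioi (0:ℝ) ×ˢ (Set.univ : Set ℝ),
            ENNReal.ofReal (BIG w * w.1) := by
      rw [← lintegral_const_mul' _ _ ENNReal.ofReal_ne_top]
      apply setLIntegral_congr_fun (measurableSet_Ioi.prod MeasurableSet.univ)
      intro w hw
      beta_reduce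
      rw [← ENNReal.ofReal_mul (by positivity)]
      congr 1
      ring
    have hle : ENNReal.ofReal (2 * π) * ∫⁻ w in Set.Ioi (0:ℝ) ×ˢ (Set.univ : Set ℝ),
        ENNReal.ofReal (BIG w * w.1) ≤ ENNReal.ofReal C := by
      rw [← hsplit]; exact H
    rw [hCCdef, ENNReal.ofReal_div_of_pos (by positivity)]
    rw [ENNReal.le_div_iff_mul_le (Or.inl (by simp [hπ, Real.pi_ne_zero]))
      (Or.inl ENNReal.ofReal_ne_top)]
    rw [mul_comm]
    exact hle
  have extract : ∀ (e : ℝ) (G : ℝ → ℝ → ℝ),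
      (∀ w : ℝ × ℝ, w ∈ Set.Ioi (0:ℝ) ×ˢ (Set.univ : Set ℝ) →
        w.1 ^ e * G w.1 w.2 ^ 2 ≤ BIG w) →
      ∫⁻ w in Set.Ioi (0:ℝ) ×ˢ (Set.univ : Set ℝ),
        ENNReal.ofReal (w.1 ^ e * G w.1 w.2 ^ 2 * w.1) ≤ ENNReal.ofReal CC := by
    intro e G hpt
    refine le_trans ?_ hH2
    apply setLIntegral_mono' (measurableSet_Ioi.prod MeasurableSet.univ)
    intro w hw
    apply ENNReal.ofReal_le_ofReal
    exact mul_le_mul_of_nonneg_right (hpt w hw) (le_of_lt (hw.1 : (0:ℝ) < w.1))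
  have hb1 := extract e1 q (by
    rintro ⟨s, z⟩ hw
    have hs : (0:ℝ) ≤ s := (hw.1 : (0:ℝ) < s).le
    have t2 : (0:ℝ) ≤ s ^ e2 := Real.rpow_nonneg hs _
    have t3 : (0:ℝ) ≤ s ^ e3 := Real.rpow_nonneg hs _
    simp only [hBIGdef]
    nlinarith [sq_nonneg (pr q s z), sq_nonneg (pz q s z), sq_nonneg (pz (pr q) s z),
      sq_nonneg (pz (pz q) s z)])
  have hb2 := extract e2 (pr q) (by
    rintro ⟨s, z⟩ hw
    have hs : (0:ℝ) ≤ s := (hw.1 : (0:ℝ) < s).le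
    have t1 : (0:ℝ) ≤ s ^ e1 := Real.rpow_nonneg hs _
    have t2 : (0:ℝ) ≤ s ^ e2 := Real.rpow_nonneg hs _
    have t3 : (0:ℝ) ≤ s ^ e3 := Real.rpow_nonneg hs _
    simp only [hBIGdef]
    nlinarith [sq_nonneg (q s z), sq_nonneg (pz q s z), sq_nonneg (pz (pr q) s z),
      sq_nonneg (pz (pz q) s z)])
  have hb3 := extract e2 (pz q) (by
    rintro ⟨s, z⟩ hw
    have hs : (0:ℝ) ≤ s := (hw.1 : (0:ℝ) < s).le
    have t1 : (0:ℝ) ≤ s ^ e1 := Real.rpow_nonneg hs _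
    have t2 : (0:ℝ) ≤ s ^ e2 := Real.rpow_nonneg hs _
    have t3 : (0:ℝ) ≤ s ^ e3 := Real.rpow_nonneg hs _
    simp only [hBIGdef]
    nlinarith [sq_nonneg (q s z), sq_nonneg (pr q s z), sq_nonneg (pz (pr q) s z),
      sq_nonneg (pz (pz q) s z)])
  have hb4 : ∫⁻ w in Set.Ioi (0:ℝ) ×ˢ (Set.univ : Set ℝ),
      ENNReal.ofReal (w.1 ^ e3 * pr (pz q) w.1 w.2 ^ 2 * w.1) ≤ ENNReal.ofReal CC := by
    have heq : (fun w : ℝ × ℝ => ENNReal.ofReal (w.1 ^ e3 * pr (pz q) w.1 w.2 ^ 2 * w.1))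
        = fun w : ℝ × ℝ => ENNReal.ofReal (w.1 ^ e3 * pz (pr q) w.1 w.2 ^ 2 * w.1) := by
      funext w
      rw [symm_mixed hq]
    rw [heq]
    apply extract e3 (fun a b => pz (pr q) a b)
    rintro ⟨s, z⟩ hw
    have hs : (0:ℝ) ≤ s := (hw.1 : (0:ℝ) < s).le
    have t1 : (0:ℝ) ≤ s ^ e1 := Real.rpow_nonneg hs _
    have t2 : (0:ℝ) ≤ s ^ e2 := Real.rpow_nonneg hs _
    have t3 : (0:ℝ) ≤ s ^ e3 := Real.rpow_nonneg hs _
    simp only [hBIGdef]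
    nlinarith [sq_nonneg (q s z), sq_nonneg (pr q s z), sq_nonneg (pz q s z),
      sq_nonneg (pz (pz q) s z)]
  have hi := Abound q hq CC e1 e2 hCC he1 he2 hb1 hb2 r hr
  have hii := Abound (fun a b => pz q a b) (contDiff_pz hq) CC e2 e3 hCC he2 he3 hb3 hb4 r hr
  have hconst : 2 * CC = C / π := by
    rw [hCCdef]; field_simp
  have hii' : (∫⁻ t : ℝ, ENNReal.ofReal ((pz q r t) ^ 2))
      ≤ ENNReal.ofReal (2 * CC * r ^ (-(e2 + e3) / 2 - 1)) := hii
  have hle2 : 2 * CC ≤ 2 * C / π := by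
    rw [hconst]
    rw [div_le_div_iff₀ hπ hπ]
    nlinarith
  refine ⟨?_, ?_, ?_⟩
  · refine le_trans hi (ENNReal.ofReal_le_ofReal ?_)
    exact mul_le_mul_of_nonneg_right hle2 (Real.rpow_nonneg hr.le _)
  · have hexp2 : (-(e3 + e2) / 2 - 1 : ℝ) = -(e2 + e3) / 2 - 1 := by ring
    rw [hexp2]
    refine le_trans hii' (ENNReal.ofReal_le_ofReal ?_)
    exact mul_le_mul_of_nonneg_right hle2 (Real.rpow_nonneg hr.le _)
  · intro z
    set α1 : ℝ := -(e1 + e2) / 2 - 1 with hα1def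
    set α2 : ℝ := -(e2 + e3) / 2 - 1 with hα2def
    set C1 : ℝ := 2 * CC * r ^ α1 with hC1def
    set C2 : ℝ := 2 * CC * r ^ α2 with hC2def
    have hC1nn : 0 ≤ C1 := by
      rw [hC1def]; positivity
    have hC2nn : 0 ≤ C2 := by
      rw [hC2def]; positivity
    have hcu : Continuous (fun t => q r t) :=
      hBIGmeas.comp (continuous_const.prodMk continuous_id)
    have hcu' : Continuous (fun t => pz q r t) :=
      hcpz.comp (continuous_const.prodMk continuous_id)
    have hder : ∀ t, HasDerivAt (fun t => q r t) (pz q r t) t := by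
      intro t
      have h := curry_pz _ (hq_diff hq) r t
      rwa [← pz_eq hq r t] at h
    set f : ℝ → ENNReal := fun t => (ENNReal.ofReal (q r t ^ 2)) ^ (1/2 : ℝ) with hfdef
    set g2 : ℝ → ENNReal := fun t => (ENNReal.ofReal (pz q r t ^ 2)) ^ (1/2 : ℝ) with hg2def
    have hT : (∫⁻ t : ℝ, ENNReal.ofReal (2 * |q r t| * |pz q r t|))
        ≤ ENNReal.ofReal (2 * (C1 ^ (1/2:ℝ) * C2 ^ (1/2:ℝ))) := by
      have hpt : ∀ t : ℝ, ENNReal.ofReal (2 * |q r t| * |pz q r t|)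
          = ENNReal.ofReal 2 * (f t * g2 t) := by
        intro t
        have hf : f t = ENNReal.ofReal |q r t| := by
          show (ENNReal.ofReal (q r t ^ 2)) ^ (1/2:ℝ) = _
          rw [ENNReal.ofReal_rpow_of_nonneg (sq_nonneg _) (by norm_num : (0:ℝ) ≤ 1/2)]
          congr 1
          rw [← sq_abs, ← Real.rpow_natCast |q r t| 2, ← Real.rpow_mul (abs_nonneg _)]
          norm_num
        have hg : g2 t = ENNReal.ofReal |pz q r t| := by
          show (ENNReal.ofReal (pz q r t ^ 2)) ^ (1/2:ℝ) = _
          rw [ENNReal.ofReal_rpow_of_nonneg (sq_nonneg _) (by norm_num : (0:ℝ) ≤ 1/2)]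
          congr 1
          rw [← sq_abs, ← Real.rpow_natCast |pz q r t| 2, ← Real.rpow_mul (abs_nonneg _)]
          norm_num
        rw [hf, hg, ← ENNReal.ofReal_mul (abs_nonneg _),
          ← ENNReal.ofReal_mul (by norm_num : (0:ℝ) ≤ 2)]
        congr 1
        ring
      have hf2 : ∀ t : ℝ, f t ^ (2:ℝ) = ENNReal.ofReal (q r t ^ 2) := by
        intro t
        show ((ENNReal.ofReal (q r t ^ 2)) ^ (1/2:ℝ)) ^ (2:ℝ) = _
        rw [← ENNReal.rpow_mul]
        norm_num
      have hg2' : ∀ t : ℝ, g2 t ^ (2:ℝ) = ENNReal.ofReal (pz q r t ^ 2) := by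
        intro t
        show ((ENNReal.ofReal (pz q r t ^ 2)) ^ (1/2:ℝ)) ^ (2:ℝ) = _
        rw [← ENNReal.rpow_mul]
        norm_num
      calc (∫⁻ t : ℝ, ENNReal.ofReal (2 * |q r t| * |pz q r t|))
          = ∫⁻ t : ℝ, ENNReal.ofReal 2 * (f t * g2 t) := lintegral_congr hpt
        _ = ENNReal.ofReal 2 * ∫⁻ t : ℝ, f t * g2 t :=
            lintegral_const_mul' _ _ ENNReal.ofReal_ne_top
        _ ≤ ENNReal.ofReal 2 * ((∫⁻ t : ℝ, f t ^ (2:ℝ)) ^ (1/2:ℝ)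
            * (∫⁻ t : ℝ, g2 t ^ (2:ℝ)) ^ (1/2:ℝ)) :=
            mul_le_mul_right (holder_two volume f g2 (by fun_prop) (by fun_prop)) _
        _ ≤ ENNReal.ofReal 2 * ((ENNReal.ofReal C1) ^ (1/2:ℝ)
            * (ENNReal.ofReal C2) ^ (1/2:ℝ)) := by
            refine mul_le_mul_right (mul_le_mul' ?_ ?_) _
            · rw [show (∫⁻ t : ℝ, f t ^ (2:ℝ)) = ∫⁻ t : ℝ, ENNReal.ofReal (q r t ^ 2) from
                lintegral_congr hf2]
              exact ENNReal.rpow_le_rpow hi (by norm_num)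
            · rw [show (∫⁻ t : ℝ, g2 t ^ (2:ℝ)) = ∫⁻ t : ℝ, ENNReal.ofReal (pz q r t ^ 2) from
                lintegral_congr hg2']
              exact ENNReal.rpow_le_rpow hii' (by norm_num)
        _ = ENNReal.ofReal (2 * (C1 ^ (1/2:ℝ) * C2 ^ (1/2:ℝ))) := by
            rw [ENNReal.ofReal_rpow_of_nonneg hC1nn (by norm_num : (0:ℝ) ≤ 1/2),
              ENNReal.ofReal_rpow_of_nonneg hC2nn (by norm_num : (0:ℝ) ≤ 1/2),
              ← ENNReal.ofReal_mul (Real.rpow_nonneg hC1nn _),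
              ← ENNReal.ofReal_mul (by norm_num : (0:ℝ) ≤ 2)]
    have hTval : 2 * (C1 ^ (1/2:ℝ) * C2 ^ (1/2:ℝ))
        = 2 * C / π * r ^ (-(e1 + 2*e2 + e3)/4 - 1) := by
      rw [← Real.mul_rpow hC1nn hC2nn]
      have hprod : C1 * C2 = (C/π) ^ 2 * r ^ (α1 + α2) := by
        rw [hC1def, hC2def, Real.rpow_add hr, hconst]
        ring
      rw [hprod, Real.mul_rpow (by positivity) (Real.rpow_nonneg hr.le _),
        ← Real.rpow_natCast (C/π) 2, ← Real.rpow_mul (by positivity),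
        ← Real.rpow_mul hr.le]
      rw [show ((2:ℕ):ℝ) * (1/2) = 1 by norm_num, Real.rpow_one]
      rw [show (α1 + α2) * (1/2) = -(e1 + 2*e2 + e3)/4 - 1 by
        rw [hα1def, hα2def]; ring]
      ring
    refine le_of_forall_pos_le_add ?_
    intro ε hε
    have hexZ : ∃ Z, z < Z ∧ q r Z ^ 2 ≤ ε := by
      by_contra hcon
      push_neg at hcon
      have hbig : ∫⁻ t in Ioi z, ENNReal.ofReal ε ≤ ∫⁻ t : ℝ, ENNReal.ofReal (q r t ^ 2) :=
        le_trans (setLIntegral_mono' measurableSet_Ioi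
          (fun t ht => ENNReal.ofReal_le_ofReal (hcon t ht).le))
          (setLIntegral_le_lintegral _ _)
      rw [setLIntegral_const, Real.volume_Ioi, ENNReal.mul_top (by simp [hε])] at hbig
      exact absurd (lt_of_le_of_lt (le_trans hbig hi) ENNReal.ofReal_lt_top) (lt_irrefl _)
    obtain ⟨Z, hzZ, hQZ⟩ := hexZ
    have hftc := ftc_sq (fun t => q r t) (fun t => pz q r t) hder hcu hcu' z Z hzZ.le
    have hENN : ENNReal.ofReal (q r z ^ 2)
        ≤ ENNReal.ofReal (ε + 2 * (C1 ^ (1/2:ℝ) * C2 ^ (1/2:ℝ))) := by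
      calc ENNReal.ofReal (q r z ^ 2)
          ≤ ENNReal.ofReal (q r Z ^ 2)
            + ∫⁻ t in Ioc z Z, ENNReal.ofReal (2 * |q r t| * |pz q r t|) := hftc
        _ ≤ ENNReal.ofReal ε + ∫⁻ t : ℝ, ENNReal.ofReal (2 * |q r t| * |pz q r t|) :=
            add_le_add (ENNReal.ofReal_le_ofReal hQZ) (setLIntegral_le_lintegral _ _)
        _ ≤ ENNReal.ofReal ε + ENNReal.ofReal (2 * (C1 ^ (1/2:ℝ) * C2 ^ (1/2:ℝ))) :=
            add_le_add_right hT _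
        _ = ENNReal.ofReal (ε + 2 * (C1 ^ (1/2:ℝ) * C2 ^ (1/2:ℝ))) :=
            (ENNReal.ofReal_add hε.le (by positivity)).symm
    have hreal : q r z ^ 2 ≤ ε + 2 * (C1 ^ (1/2:ℝ) * C2 ^ (1/2:ℝ)) :=
      (ENNReal.ofReal_le_ofReal_iff (by positivity)).mp hENN
    rw [hTval] at hreal
    linarith
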